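/- Suppose (G, ψ) has a weighted elimination ordering (v₁, …, v_ℓ) with corresponding coordinates x₁, …, x_ℓ (and extra coordinate z). For 1 ≤ k ≤ ℓ define the derivation θ_k = Σ_{i ∈ C_{≥k}} (∏_{j ∈ E_{<k}} (x_j − x_i) ∏_{a ∈ ψ(v_k)} (x_i − a z)) ∂/∂x_i on the polynomial ring K[z, x₁, …, x_ℓ], where E_{<k} = {j : 1 ≤ j < k, {v_j, v_k} ∈ E_G}. Then θ_k(x_s − x_t) lies in the ideal generated by x_s − x_t for every edge {v_s, v_t} ∈ E_G. -/

import Mathlib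

open MvPolynomial

variable {ℓ : ℕ} {K : Type*} [Field K]

/-- `C_{≥k}`: the set containing `k` and all `i > k` reachable from `k` by a path whose
intermediate vertices have strictly increasing indices, all strictly between `k` and `i`. -/
def Cge (G : SimpleGraph (Fin ℓ)) (k : Fin ℓ) : Set (Fin ℓ) :=
  {i | i = k ∨ (k < i ∧ ∃ l : List (Fin ℓ),
    List.Chain G.Adj k (l ++ [i]) ∧ List.Chain' (· < ·) l ∧ ∀ j ∈ l, k < j ∧ j < i)}

open Classical in
/-- `E_{<k}`: the set of earlier neighbours of `k`. -/
noncomputable def Elt (G : SimpleGraph (Fin ℓ)) (k : Fin ℓ) : Finset (Fin ℓ) :=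
  Finset.univ.filter fun j => j < k ∧ G.Adj j k

open Classical in
/-- The derivation `θ_k` of `K[z, x₁, …, x_ℓ]` (variables indexed by `Option (Fin ℓ)`,
with `none` for `z`), given by
`θ_k = Σ_{i ∈ C_{≥k}} (∏_{j ∈ E_{<k}} (x_j − x_i) ∏_{a ∈ ψ(v_k)} (x_i − a z)) ∂/∂x_i`,
applied to a polynomial `p`. -/
noncomputable def theta (G : SimpleGraph (Fin ℓ)) (ψ : Fin ℓ → Finset K) (k : Fin ℓ)
    (p : MvPolynomial (Option (Fin ℓ)) K) : MvPolynomial (Option (Fin ℓ)) K :=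
  ∑ i : Fin ℓ,
    if i ∈ Cge G k then
      ((∏ j ∈ Elt G k, (X (some j) - X (some i))) *
        ∏ a ∈ ψ k, (X (some i) - C a * X none)) * pderiv (some i) p
    else 0

/-- Descent lemma: given an increasing path from `k` to `s` (all intermediates between `k`
and `s`), and `t` adjacent to `s` with `t < s`, either `t > k` and `t ∈ Cge G k`,
or `t < k` and `t` is adjacent to `k`. -/
lemma descend (G : SimpleGraph (Fin ℓ))
    (hpeo : ∀ t a b : Fin ℓ, a < t → b < t → a ≠ b → G.Adj a t → G.Adj b t → G.Adj a b)
    (k : Fin ℓ) :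
    ∀ (l : List (Fin ℓ)) (s t : Fin ℓ),
      List.Chain G.Adj k (l ++ [s]) → List.Pairwise (· < ·) l →
      (∀ j ∈ l, k < j) → (∀ j ∈ l, j < s) → k < s → G.Adj t s → t < s →
      (k < t → t ∈ Cge G k) ∧ (t < k → G.Adj t k) := by
  intro l
  induction l using List.reverseRecOn with
  | nil =>
    intro s t hc _ _ _ hks hts hlt
    have hks' : G.Adj k s := List.isChain_pair.mp hc
    constructor
    · intro hkt
      have hadj : G.Adj k t := hpeo s k t hks hlt (ne_of_lt hkt) hks' hts
      exact Or.inr ⟨hkt, [], List.isChain_pair.mpr hadj, List.isChain_nil, by simp⟩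
    · intro htk
      exact hpeo s t k hlt hks (ne_of_lt htk) hts hks'
  | append_singleton l' w ih =>
    intro s t hc hpw hkb hsb hks hts hlt
    have hc' : List.Chain G.Adj k (l' ++ [w]) ∧ List.Chain G.Adj w [s] := by
      rw [List.append_assoc] at hc
      exact List.isChain_cons_split.mp hc
    have hws : G.Adj w s := List.isChain_pair.mp hc'.2
    have hkw : k < w := hkb w (by simp)
    have hwlt : w < s := hsb w (by simp)
    have hpw' : List.Pairwise (· < ·) l' := (List.pairwise_append.mp hpw).1
    have hbw : ∀ j ∈ l', j < w := by
      intro j hj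
      exact (List.pairwise_append.mp hpw).2.2 j hj w (by simp)
    by_cases htw : t = w
    · subst htw
      constructor
      · intro _
        exact Or.inr ⟨hkw, l', hc'.1, List.isChain_iff_pairwise.mpr hpw',
          fun j hj => ⟨hkb j (by simp [hj]), hbw j hj⟩⟩
      · intro h; exact absurd hkw (not_lt.mpr h.le)
    · have htwadj : G.Adj t w := hpeo s t w hlt hwlt htw hts hws
      rcases lt_or_gt_of_ne htw with h1 | h1
      · exact ih w t hc'.1 hpw' (fun j hj => hkb j (by simp [hj])) hbw hkw htwadj h1
      · -- w < t, so k < t; build path l' ++ [w] to t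
        have hkt : k < t := hkw.trans h1
        constructor
        · intro _
          refine Or.inr ⟨hkt, l' ++ [w], ?_, List.isChain_iff_pairwise.mpr hpw, ?_⟩
          · rw [List.append_assoc]
            exact List.isChain_cons_split.mpr ⟨hc'.1, List.isChain_pair.mpr htwadj.symm⟩
          · intro j hj
            rcases List.mem_append.mp hj with hj | hj
            · exact ⟨hkb j (by simp [hj]), (hbw j hj).trans h1⟩
            · simp only [List.mem_singleton] at hj; subst hj; exact ⟨hkw, h1⟩
        · intro h; exact absurd hkt (not_lt.mpr h.le)

/-- Key combinatorial lemma: if `s ∈ C_{≥k}`, `t ∉ C_{≥k}` and `s, t` adjacent,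
then `t` is an earlier neighbour of `k`. -/
lemma mem_Elt_of_adj (G : SimpleGraph (Fin ℓ))
    (hpeo : ∀ t a b : Fin ℓ, a < t → b < t → a ≠ b → G.Adj a t → G.Adj b t → G.Adj a b)
    (k s t : Fin ℓ) (hs : s ∈ Cge G k) (ht : t ∉ Cge G k) (hadj : G.Adj s t) :
    t < k ∧ G.Adj t k := by
  have htk : t ≠ k := fun h => ht (Or.inl h)
  rcases hs with hs | ⟨hks, l, hc, hl, hb⟩
  · subst hs
    rcases lt_or_gt_of_ne htk with h1 | h1
    · exact ⟨h1, hadj.symm⟩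
    · exact absurd (Or.inr ⟨h1, [], List.isChain_pair.mpr hadj, List.isChain_nil, by simp⟩) ht
  · have hts : t ≠ s := fun h => G.irrefl (h ▸ hadj)
    have hpl : List.Pairwise (· < ·) l := List.isChain_iff_pairwise.mp hl
    rcases lt_or_gt_of_ne hts with h1 | h1
    · have := descend G hpeo k l s t hc hpl (fun j hj => (hb j hj).1)
        (fun j hj => (hb j hj).2) hks hadj.symm h1
      rcases lt_trichotomy t k with h2 | h2 | h2
      · exact ⟨h2, this.2 h2⟩
      · exact absurd h2 htk
      · exact absurd (this.1 h2) ht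
    · -- s < t : extend the path, contradiction with ht
      exfalso
      apply ht
      refine Or.inr ⟨hks.trans h1, l ++ [s], ?_, ?_, ?_⟩
      · rw [List.append_assoc]
        exact List.isChain_cons_split.mpr ⟨hc, List.isChain_pair.mpr hadj⟩
      · refine List.isChain_iff_pairwise.mpr (List.pairwise_append.mpr
          ⟨hpl, List.pairwise_singleton _ _, fun a ha b hb' => ?_⟩)
        simp only [List.mem_singleton] at hb'; subst hb'
        exact (hb a ha).2
      · intro j hj
        rcases List.mem_append.mp hj with hj | hj
        · exact ⟨(hb j hj).1, (hb j hj).2.trans h1⟩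
        · simp only [List.mem_singleton] at hj; subst hj
          exact ⟨hks, h1⟩
theorem stmt11 (G : SimpleGraph (Fin ℓ)) (ψ : Fin ℓ → Finset K)
    (hpeo : ∀ t a b : Fin ℓ, a < t → b < t → a ≠ b → G.Adj a t → G.Adj b t → G.Adj a b)
    (hdec : ∀ i j : Fin ℓ, i < j → G.Adj i j → ψ j ⊆ ψ i)
    (k s t : Fin ℓ) (hadj : G.Adj s t) :
    theta G ψ k (X (some s) - X (some t)) ∈
      Ideal.span ({X (some s) - X (some t)} : Set (MvPolynomial (Option (Fin ℓ)) K)) := by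
  classical
  set F : Fin ℓ → MvPolynomial (Option (Fin ℓ)) K := fun i =>
    (∏ j ∈ Elt G k, (X (some j) - X (some i))) * ∏ a ∈ ψ k, (X (some i) - C a * X none)
    with hF
  have hst : s ≠ t := G.ne_of_adj hadj
  have hkey : theta G ψ k (X (some s) - X (some t)) =
      (if s ∈ Cge G k then F s else 0) - (if t ∈ Cge G k then F t else 0) := by
    rw [theta]
    rw [show (∑ i : Fin ℓ,
        if i ∈ Cge G k then
          ((∏ j ∈ Elt G k, (X (some j) - X (some i))) *
            ∏ a ∈ ψ k, (X (some i) - C a * X none)) *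
            pderiv (some i) (X (some s) - X (some t) : MvPolynomial (Option (Fin ℓ)) K)
        else 0) =
        ∑ i : Fin ℓ, ((if i = s then (if s ∈ Cge G k then F s else 0) else 0) -
          (if i = t then (if t ∈ Cge G k then F t else 0) else 0)) from ?_]
    · rw [Finset.sum_sub_distrib, Finset.sum_ite_eq', Finset.sum_ite_eq']
      simp
    · refine Finset.sum_congr rfl fun i _ => ?_
      have hd : (pderiv (some i)) (X (some s) - X (some t) : MvPolynomial (Option (Fin ℓ)) K) =
          (if i = s then 1 else 0) - (if i = t then 1 else 0) := by
        rw [map_sub, pderiv_X, pderiv_X]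
        simp [Pi.single_apply, eq_comm]
      rw [hd]
      by_cases his : i = s
      · subst his
        simp [hst, hF]
      · by_cases hit : i = t
        · subst hit
          by_cases h : i ∈ Cge G k <;> simp [his, h, hF]
        · by_cases h : i ∈ Cge G k <;> simp [his, hit, h]
  rw [hkey, Ideal.mem_span_singleton]
  -- polynomial q with q.eval (X i) = F i
  set q : Polynomial (MvPolynomial (Option (Fin ℓ)) K) :=
    (∏ j ∈ Elt G k, (Polynomial.C (X (some j)) - Polynomial.X)) *
      ∏ a ∈ ψ k, (Polynomial.X - Polynomial.C (C a * X none)) with hq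
  have heval : ∀ i : Fin ℓ, q.eval (X (some i)) = F i := by
    intro i
    simp [hq, hF, Polynomial.eval_prod]
  by_cases hsC : s ∈ Cge G k <;> by_cases htC : t ∈ Cge G k
  · -- both: F s - F t divisible
    rw [if_pos hsC, if_pos htC, ← heval, ← heval]
    exact Polynomial.sub_dvd_eval_sub _ _ q
  · -- s in, t out: t ∈ Elt G k, so (X t - X s) ∣ F s
    obtain ⟨h1, h2⟩ := mem_Elt_of_adj G hpeo k s t hsC htC hadj
    have htE : t ∈ Elt G k := by simp [Elt, h1, h2]
    rw [if_pos hsC, if_neg htC, sub_zero, hF]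
    have hd : (X (some s) - X (some t) : MvPolynomial (Option (Fin ℓ)) K) ∣
        (X (some t) - X (some s)) := by
      rw [show (X (some t) - X (some s) : MvPolynomial (Option (Fin ℓ)) K) =
        -(X (some s) - X (some t)) by ring]
      exact dvd_neg.mpr dvd_rfl
    exact Dvd.dvd.mul_right
      (hd.trans (Finset.dvd_prod_of_mem (fun j => X (some j) - X (some s)) htE)) _
  · -- t in, s out: s ∈ Elt G k, so (X s - X t) ∣ F t
    obtain ⟨h1, h2⟩ := mem_Elt_of_adj G hpeo k t s htC hsC hadj.symm
    have hsE : s ∈ Elt G k := by simp [Elt, h1, h2]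
    rw [if_neg hsC, if_pos htC, zero_sub, dvd_neg, hF]
    exact Dvd.dvd.mul_right
      (Finset.dvd_prod_of_mem (fun j => X (some j) - X (some t)) hsE) _
  · simp [hsC, htC]
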